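/- Let $h_x, h_y \in (0,1]$ and $T_h = \{(x,y) : 0 < x < h_x,\ 0 < y < h_y(1 - x/h_x)\}$ be an anisotropic triangle. There exists $C > 0$ independent of $p$, $h_x$, $h_y$ such that for every bivariate polynomial $\pi$ of total degree at most $p$: $\|\pi\|_{L^\infty(T_h)} \le C\,p\,(h_y/h_x)^{1/2}\,\|\partial_y\pi\|_{L^2(T_h)} + \|\pi(\cdot,0)\|_{L^\infty(0,h_x)}$. -/

import Mathlib

open Set intervalIntegral

noncomputable section

/-- Evaluation of a bivariate polynomial at `(x, y)`. -/
def ev (P : MvPolynomial (Fin 2) ℝ) (x y : ℝ) : ℝ := MvPolynomial.eval ![x, y] P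

open Polynomial

namespace Leg

/-- Rodrigues numerator. -/
def u (n : ℕ) : ℝ[X] := (X ^ 2 - 1) ^ n

/-- Legendre polynomial. -/
def P (n : ℕ) : ℝ[X] := Polynomial.C ((2 ^ n * n.factorial : ℝ)⁻¹) * derivative^[n] (u n)

lemma contPoly (p : ℝ[X]) : Continuous fun x : ℝ => p.eval x := p.continuous_aeval

lemma intPoly (p : ℝ[X]) (a b : ℝ) : IntervalIntegrable (fun x => p.eval x) MeasureTheory.volume a b :=
  (contPoly p).intervalIntegrable a b

lemma u_dvd (n j : ℕ) (hj : j ≤ n) : ∃ r : ℝ[X], derivative^[j] (u n) = (X ^ 2 - 1) ^ (n - j) * r := by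
  induction j with
  | zero => exact ⟨1, by simp [u]⟩
  | succ j ih =>
    obtain ⟨r, hr⟩ := ih (le_of_lt (Nat.lt_of_succ_le hj))
    refine ⟨Polynomial.C ((n - j : ℕ) : ℝ) * (Polynomial.C ((2:ℕ):ℝ) * X) * r + (X ^ 2 - 1) * derivative r, ?_⟩
    rw [Function.iterate_succ_apply', hr]
    have h2 : derivative (X ^ 2 - 1 : ℝ[X]) = Polynomial.C ((2:ℕ):ℝ) * X := by
      simp only [derivative_sub, derivative_one, derivative_X_pow, sub_zero]; norm_num
    have hnj : (X ^ 2 - 1 : ℝ[X]) ^ (n - j) = (X ^ 2 - 1) ^ (n - (j + 1)) * (X ^ 2 - 1) := by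
      rw [← pow_succ]
      congr 1
      omega
    rw [derivative_mul, derivative_pow, h2, Nat.sub_sub, hnj]
    ring

lemma u_iter_eval (n j : ℕ) (hj : j < n) (a : ℝ) (ha : a ^ 2 = 1) :
    (derivative^[j] (u n)).eval a = 0 := by
  obtain ⟨r, hr⟩ := u_dvd n j hj.le
  rw [hr]
  simp [ha, zero_pow (by omega : n - j ≠ 0)]

lemma ibp_single (a b : ℝ[X]) :
    (∫ x in (-1:ℝ)..1, ((derivative a).eval x * b.eval x + a.eval x * (derivative b).eval x))
      = (a * b).eval 1 - (a * b).eval (-1) := by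
  apply intervalIntegral.integral_eq_sub_of_hasDerivAt (f := fun x => (a * b).eval x)
  · intro x _
    have := (a * b).hasDerivAt x
    rwa [derivative_mul, eval_add, eval_mul, eval_mul] at this
  · exact ((((contPoly (derivative a)).mul (contPoly b)).add
      ((contPoly a).mul (contPoly (derivative b))))).intervalIntegrable _ _

lemma ibp (n : ℕ) : ∀ w f : ℝ[X],
    (∀ j, j < n → (derivative^[j] w).eval 1 = 0 ∧ (derivative^[j] w).eval (-1) = 0) →
    (∫ x in (-1:ℝ)..1, f.eval x * (derivative^[n] w).eval x)
      = (-1 : ℝ) ^ n * ∫ x in (-1:ℝ)..1, (derivative^[n] f).eval x * w.eval x := by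
  induction n with
  | zero => intro w f _; simp
  | succ n ih =>
    intro w f hw
    have key : (∫ x in (-1:ℝ)..1, f.eval x * (derivative^[n] (derivative w)).eval x)
        = (-1:ℝ) ^ n * ∫ x in (-1:ℝ)..1, (derivative^[n] f).eval x * (derivative w).eval x := by
      apply ih
      intro j hj
      rw [← Function.iterate_succ_apply]
      exact hw (j + 1) (by omega)
    have h0 := hw 0 (by omega)
    simp only [Function.iterate_zero_apply] at h0
    have single := ibp_single (derivative^[n] f) w
    have heq : (derivative^[n] f * w).eval 1 - (derivative^[n] f * w).eval (-1) = 0 := by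
      simp [eval_mul, h0.1, h0.2]
    rw [heq] at single
    have hsplit : (∫ x in (-1:ℝ)..1, (derivative^[n+1] f).eval x * w.eval x)
        + (∫ x in (-1:ℝ)..1, (derivative^[n] f).eval x * (derivative w).eval x) = 0 := by
      rw [← intervalIntegral.integral_add
        (((contPoly _).fun_mul (contPoly _)).intervalIntegrable _ _)
        (((contPoly _).fun_mul (contPoly _)).intervalIntegrable _ _)]
      rw [← single]
      congr 1
      ext x
      rw [Function.iterate_succ_apply']
    rw [Function.iterate_succ_apply, key]
    have : (∫ x in (-1:ℝ)..1, (derivative^[n] f).eval x * (derivative w).eval x)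
        = - ∫ x in (-1:ℝ)..1, (derivative^[n+1] f).eval x * w.eval x := by linarith
    rw [this]
    ring

-- eval at roots
lemma iter_eval (n : ℕ) : ∀ (g : ℝ[X]) (a : ℝ),
    (derivative^[n] ((X - Polynomial.C a) ^ n * g)).eval a = n.factorial * g.eval a := by
  induction n with
  | zero => intro g a; simp
  | succ n ih =>
    intro g a
    rw [Function.iterate_succ_apply]
    have hd : derivative ((X - Polynomial.C a) ^ (n + 1) * g)
        = (X - Polynomial.C a) ^ n *
          (Polynomial.C ((n + 1 : ℕ) : ℝ) * g + (X - Polynomial.C a) * derivative g) := by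
      rw [derivative_mul, derivative_pow, derivative_sub, derivative_X, derivative_C, sub_zero,
        mul_one, Nat.add_sub_cancel, pow_succ]
      ring
    rw [hd, ih]
    simp only [eval_add, eval_mul, eval_sub, eval_X, eval_C, sub_self, zero_mul, add_zero]
    rw [Nat.factorial_succ]
    push_cast
    ring

lemma u_eq (n : ℕ) : u n = (X - Polynomial.C (1:ℝ)) ^ n * (X + Polynomial.C (1:ℝ)) ^ n := by
  rw [u, ← mul_pow]
  congr 1
  simp only [Polynomial.C_1]
  ring

lemma P_eval_one (n : ℕ) : (P n).eval 1 = 1 := by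
  have h : (derivative^[n] (u n)).eval 1 = n.factorial * ((X + Polynomial.C (1:ℝ)) ^ n).eval 1 := by
    rw [u_eq]; exact iter_eval n _ 1
  rw [P, eval_mul, eval_C, h]
  simp only [eval_pow, eval_add, eval_X, eval_C]
  have h2 : ((2:ℝ) ^ n * n.factorial) ≠ 0 := by positivity
  field_simp
  rw [show (1 + 1 : ℝ) = 2 by norm_num]

lemma P_eval_negone (n : ℕ) : (P n).eval (-1) = (-1) ^ n := by
  have hu : u n = (X - Polynomial.C (-1:ℝ)) ^ n * (X - Polynomial.C (1:ℝ)) ^ n := by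
    rw [u, ← mul_pow]
    congr 1
    simp only [map_neg, Polynomial.C_1]
    ring
  have h : (derivative^[n] (u n)).eval (-1)
      = n.factorial * ((X - Polynomial.C (1:ℝ)) ^ n).eval (-1) := by
    rw [hu]; exact iter_eval n _ (-1)
  rw [P, eval_mul, eval_C, h]
  simp only [eval_pow, eval_sub, eval_X, eval_C]
  have h3 : (-1 - 1 : ℝ) ^ n = (-1) ^ n * 2 ^ n := by
    rw [show (-1 - 1 : ℝ) = (-1) * 2 by norm_num, mul_pow]
  rw [h3]
  have h2 : ((2:ℝ) ^ n * n.factorial) ≠ 0 := by positivity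
  field_simp

-- degree and coefficients
lemma u_monic (n : ℕ) : (u n).Monic := by
  rw [u, show (X ^ 2 - 1 : ℝ[X]) = X ^ 2 - Polynomial.C 1 by rw [Polynomial.C_1]]
  exact (monic_X_pow_sub_C (1:ℝ) (by norm_num)).pow n

lemma u_natDegree (n : ℕ) : (u n).natDegree = 2 * n := by
  rw [u]
  rw [show (X ^ 2 - 1 : ℝ[X]) = X ^ 2 - Polynomial.C 1 by rw [Polynomial.C_1]]
  rw [Polynomial.natDegree_pow, natDegree_X_pow_sub_C]
  ring

lemma P_natDegree_le (n : ℕ) : (P n).natDegree ≤ n := by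
  rw [P]
  refine (Polynomial.natDegree_C_mul_le _ _).trans ?_
  refine (Polynomial.natDegree_iterate_derivative _ _).trans ?_
  rw [u_natDegree]
  omega

lemma P_coeff (n : ℕ) :
    (P n).coeff n = (2 ^ n * n.factorial : ℝ)⁻¹ * ((2 * n).descFactorial n : ℝ) := by
  rw [P, Polynomial.coeff_C_mul, Polynomial.coeff_iterate_derivative]
  have h1 : (u n).coeff (n + n) = 1 := by
    have := (u_monic n).coeff_natDegree
    rwa [u_natDegree, two_mul] at this
  rw [h1]
  rw [show n + n = 2 * n by ring]
  simp [nsmul_eq_mul]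

lemma P_coeff_ne (n : ℕ) : (P n).coeff n ≠ 0 := by
  rw [P_coeff]
  apply mul_ne_zero
  · apply inv_ne_zero; positivity
  · have : (2 * n).descFactorial n ≠ 0 := by
      rw [Ne, Nat.descFactorial_eq_zero_iff_lt]
      omega
    positivity

lemma P_iter_deriv (n : ℕ) :
    derivative^[n] (P n) = Polynomial.C ((n.factorial : ℝ) * (P n).coeff n) := by
  have hdeg : (derivative^[n] (P n)).natDegree = 0 := by
    have := Polynomial.natDegree_iterate_derivative (P n) n
    have h2 := P_natDegree_le n
    omega
  have := Polynomial.eq_C_of_natDegree_le_zero hdeg.le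
  rw [this, Polynomial.coeff_iterate_derivative]
  congr 1
  rw [zero_add, nsmul_eq_mul, Nat.descFactorial_self]


-- the integral of (1-x^2)^n
lemma J_val (n : ℕ) : (∫ x in (-1:ℝ)..1, (1 - x ^ 2) ^ n)
    = 2 ^ (2 * n + 1) * ((n.factorial : ℝ)) ^ 2 / ((2 * n + 1).factorial) := by
  induction n with
  | zero => simp; norm_num
  | succ n ih =>
    have hpoly : derivative (X * (1 - X ^ 2) ^ (n + 1)) =
        Polynomial.C (((2 * n + 3 : ℕ) : ℝ)) * (1 - X ^ 2) ^ (n + 1)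
          - Polynomial.C (((2 * n + 2 : ℕ) : ℝ)) * (1 - X ^ 2) ^ n := by
      rw [derivative_mul, derivative_X, derivative_pow, derivative_sub, derivative_one,
        derivative_X_pow]
      simp only [Polynomial.C_eq_natCast, Nat.add_sub_cancel, show (2:ℕ) - 1 = 1 from rfl,
        pow_one]
      push_cast
      ring
    have hftc : (∫ x in (-1:ℝ)..1, (((2 * n + 3 : ℕ) : ℝ) * (1 - x ^ 2) ^ (n + 1)
        - ((2 * n + 2 : ℕ) : ℝ) * (1 - x ^ 2) ^ n)) = 0 := by
      have h := intervalIntegral.integral_eq_sub_of_hasDerivAt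
        (f := fun x : ℝ => (X * (1 - X ^ 2) ^ (n + 1) : ℝ[X]).eval x)
        (f' := fun x : ℝ => ((2 * n + 3 : ℕ) : ℝ) * (1 - x ^ 2) ^ (n + 1)
          - ((2 * n + 2 : ℕ) : ℝ) * (1 - x ^ 2) ^ n)
        (a := (-1:ℝ)) (b := 1)
        ?_ ?_
      · rw [h]; simp
      · intro x _
        have h2 := (X * (1 - X ^ 2) ^ (n + 1) : ℝ[X]).hasDerivAt x
        rw [hpoly] at h2
        simpa using h2
      · apply Continuous.intervalIntegrable
        continuity
    have hsub : (∫ x in (-1:ℝ)..1, (((2 * n + 3 : ℕ) : ℝ) * (1 - x ^ 2) ^ (n + 1)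
        - ((2 * n + 2 : ℕ) : ℝ) * (1 - x ^ 2) ^ n))
        = ((2 * n + 3 : ℕ) : ℝ) * (∫ x in (-1:ℝ)..1, (1 - x ^ 2) ^ (n + 1))
          - ((2 * n + 2 : ℕ) : ℝ) * (∫ x in (-1:ℝ)..1, (1 - x ^ 2) ^ n) := by
      rw [intervalIntegral.integral_sub, intervalIntegral.integral_const_mul,
        intervalIntegral.integral_const_mul]
      · apply Continuous.intervalIntegrable; continuity
      · apply Continuous.intervalIntegrable; continuity
    rw [hsub, ih] at hftc
    have h23 : ((2 * n + 3 : ℕ) : ℝ) ≠ 0 := by positivity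
    have hfact : ((2 * (n + 1) + 1).factorial : ℝ)
        = ((2 * n + 3 : ℕ) : ℝ) * ((2 * n + 2 : ℕ) : ℝ) * ((2 * n + 1).factorial : ℝ) := by
      rw [show 2 * (n + 1) + 1 = (2 * n + 1) + 1 + 1 by ring, Nat.factorial_succ,
        Nat.factorial_succ]
      push_cast
      ring
    have hfn : ((n + 1).factorial : ℝ) = ((n + 1 : ℕ) : ℝ) * (n.factorial : ℝ) := by
      rw [Nat.factorial_succ]; push_cast; ring
    have hf1 : ((2 * n + 1).factorial : ℝ) ≠ 0 := by positivity
    rw [hfact, hfn, show 2 * (n + 1) + 1 = (2 * n + 1) + 2 by ring, pow_add]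
    push_cast at hftc ⊢
    field_simp at hftc ⊢
    linear_combination hftc


lemma u_integral (n : ℕ) : (∫ x in (-1:ℝ)..1, (u n).eval x)
    = (-1 : ℝ) ^ n * (2 ^ (2 * n + 1) * ((n.factorial : ℝ)) ^ 2 / ((2 * n + 1).factorial)) := by
  rw [← J_val n, ← intervalIntegral.integral_const_mul]
  congr 1
  ext x
  rw [u]
  simp only [eval_pow, eval_sub, eval_one, eval_X]
  rw [show (x ^ 2 - 1 : ℝ) = (-1) * (1 - x ^ 2) by ring, mul_pow]

lemma P_vanish (n : ℕ) : ∀ j, j < n →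
    (derivative^[j] (u n)).eval 1 = 0 ∧ (derivative^[j] (u n)).eval (-1) = 0 :=
  fun j hj => ⟨u_iter_eval n j hj 1 (by norm_num), u_iter_eval n j hj (-1) (by norm_num)⟩

lemma integral_mul_P (f : ℝ[X]) (n : ℕ) :
    (∫ x in (-1:ℝ)..1, f.eval x * (P n).eval x)
      = (2 ^ n * n.factorial : ℝ)⁻¹ * ((-1:ℝ) ^ n
        * ∫ x in (-1:ℝ)..1, (derivative^[n] f).eval x * (u n).eval x) := by
  have h1 : (∫ x in (-1:ℝ)..1, f.eval x * (P n).eval x)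
      = (2 ^ n * n.factorial : ℝ)⁻¹
        * ∫ x in (-1:ℝ)..1, f.eval x * (derivative^[n] (u n)).eval x := by
    rw [← intervalIntegral.integral_const_mul]
    congr 1
    ext x
    rw [P, eval_mul, eval_C]
    ring
  rw [h1, ibp n (u n) f (P_vanish n)]

lemma P_orth {m n : ℕ} (hmn : m < n) :
    (∫ x in (-1:ℝ)..1, (P m).eval x * (P n).eval x) = 0 := by
  rw [integral_mul_P]
  rw [Polynomial.iterate_derivative_eq_zero (lt_of_le_of_lt (P_natDegree_le m) hmn)]
  simp

lemma P_norm (n : ℕ) :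
    (∫ x in (-1:ℝ)..1, (P n).eval x * (P n).eval x) = 2 / (2 * (n : ℝ) + 1) := by
  rw [integral_mul_P, P_iter_deriv]
  have h2 : (∫ x in (-1:ℝ)..1,
      (Polynomial.C ((n.factorial : ℝ) * (P n).coeff n)).eval x * (u n).eval x)
      = ((n.factorial : ℝ) * (P n).coeff n) * ∫ x in (-1:ℝ)..1, (u n).eval x := by
    rw [← intervalIntegral.integral_const_mul]
    congr 1
    ext x
    rw [eval_C]
  rw [h2, u_integral, P_coeff]
  have hd : (n.factorial : ℝ) * ((2 * n).descFactorial n : ℝ) = ((2 * n).factorial : ℝ) := by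
    have := Nat.factorial_mul_descFactorial (show n ≤ 2 * n by omega)
    rw [show 2 * n - n = n by omega] at this
    push_cast [← this]
    ring
  have hfact2 : ((2 * n + 1).factorial : ℝ) = ((2 * n + 1 : ℕ) : ℝ) * ((2 * n).factorial : ℝ) := by
    rw [Nat.factorial_succ]
    push_cast
    ring
  have hne1 : ((2:ℝ) ^ n * n.factorial) ≠ 0 := by positivity
  have hne2 : ((2 * n + 1 : ℕ) : ℝ) ≠ 0 := by positivity
  have hne3 : ((2 * n).factorial : ℝ) ≠ 0 := by positivity
  have hne4 : (n.factorial : ℝ) ≠ 0 := by positivity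
  have hsq : ((-1:ℝ) ^ n) * ((-1:ℝ) ^ n) = 1 := by
    rw [← mul_pow]; norm_num
  rw [show ((2:ℝ) ^ n * ↑n.factorial)⁻¹ * ((-1:ℝ) ^ n * (↑n.factorial
      * (((2:ℝ) ^ n * ↑n.factorial)⁻¹ * ((2 * n).descFactorial n : ℝ))
      * ((-1:ℝ) ^ n * (2 ^ (2 * n + 1) * (↑n.factorial) ^ 2 / ↑(2 * n + 1).factorial))))
    = (((2:ℝ) ^ n * ↑n.factorial)⁻¹ * ((2:ℝ) ^ n * ↑n.factorial)⁻¹)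
      * ((↑n.factorial * ((2 * n).descFactorial n : ℝ)))
      * (2 ^ (2 * n + 1) * (↑n.factorial) ^ 2 / ↑(2 * n + 1).factorial)
      * ((-1:ℝ) ^ n * (-1:ℝ) ^ n) by ring, hsq, mul_one, hd, hfact2,
    show 2 * n + 1 = n + (n + 1) by ring, pow_add]
  field_simp
  push_cast
  ring

-- derivative facts at function level
lemma hasDerivAt_iter (n k : ℕ) (x : ℝ) :
    HasDerivAt (fun y => (derivative^[k] (u n)).eval y) ((derivative^[k+1] (u n)).eval x) x := by
  have h := (derivative^[k] (u n)).hasDerivAt x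
  rwa [← Function.iterate_succ_apply' (⇑derivative) k (u n)] at h

lemma deriv_sq : derivative (X ^ 2 - 1 : ℝ[X]) = Polynomial.C ((2:ℕ):ℝ) * X := by
  simp only [derivative_sub, derivative_one, derivative_X_pow, sub_zero]; norm_num

lemma E (n : ℕ) : ∀ (k : ℕ) (x : ℝ),
    (x ^ 2 - 1) * (derivative^[k+1] (u n)).eval x
      = (2 * (n:ℝ) - 2 * k) * x * (derivative^[k] (u n)).eval x
        + ((k:ℝ) * (2 * n - k + 1)) * (derivative^[k-1] (u n)).eval x := by
  intro k
  induction k with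
  | zero =>
    intro x
    rcases Nat.eq_zero_or_pos n with hn | hn
    · subst hn; simp [u]
    · have hder : derivative (u n)
          = Polynomial.C ((n:ℕ):ℝ) * ((X^2-1)^(n-1) * (Polynomial.C ((2:ℕ):ℝ) * X)) := by
        rw [u, derivative_pow, deriv_sq]; ring
      simp only [Function.iterate_succ_apply', Function.iterate_zero_apply, hder]
      simp only [eval_mul, eval_C, eval_pow, eval_sub, eval_one, eval_X, Nat.cast_zero,
        Nat.cast_ofNat, zero_sub, mul_zero, zero_mul, add_zero, mul_one]
      have hp : (x ^ 2 - 1) * (x ^ 2 - 1) ^ (n - 1) = (x ^ 2 - 1) ^ n := by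
        rw [← pow_succ']
        congr 1
        omega
      simp only [u, eval_pow, eval_sub, eval_one, eval_X]
      push_cast
      linear_combination (2 * (n:ℝ) * x) * hp
  | succ k ih =>
    intro x
    have hL : HasDerivAt (fun y : ℝ => (y ^ 2 - 1) * (derivative^[k+1] (u n)).eval y)
        (2 * x * (derivative^[k+1] (u n)).eval x
          + (x ^ 2 - 1) * (derivative^[k+2] (u n)).eval x) x := by
      have h1 : HasDerivAt (fun y : ℝ => y ^ 2 - 1) (2 * x) x := by
        simpa using (hasDerivAt_pow 2 x).sub_const 1
      exact h1.mul (hasDerivAt_iter n (k+1) x)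
    have h1 : HasDerivAt (fun y : ℝ => y * (derivative^[k] (u n)).eval y)
        ((derivative^[k] (u n)).eval x + x * (derivative^[k+1] (u n)).eval x) x := by
      have h := (hasDerivAt_id x).fun_mul (hasDerivAt_iter n k x)
      simpa using h
    have hR := (h1.const_mul (2 * (n:ℝ) - 2 * k)).add
      ((hasDerivAt_iter n (k-1) x).const_mul ((k:ℝ) * (2 * n - k + 1)))
    have hfun : (fun y : ℝ => (y ^ 2 - 1) * (derivative^[k+1] (u n)).eval y)
        = (fun y : ℝ => (2 * (n:ℝ) - 2 * k) * (y * (derivative^[k] (u n)).eval y)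
          + ((k:ℝ) * (2 * n - k + 1)) * (derivative^[k-1] (u n)).eval y) :=
      funext (fun y => by rw [ih y]; ring)
    rw [hfun] at hL
    have huniq := hL.unique hR
    rcases k with _ | j
    · push_cast at huniq ⊢
      linear_combination huniq
    · have hidx : (j + 1 - 1) + 1 = j + 1 := by omega
      rw [hidx] at huniq
      have hidx2 : (j + 1 + 1 : ℕ) - 1 = j + 1 := by omega
      rw [hidx2]
      push_cast at huniq ⊢
      linear_combination huniq

lemma P_deriv_eval (n : ℕ) (x : ℝ) :
    (derivative (P n)).eval x = (2 ^ n * n.factorial : ℝ)⁻¹ * (derivative^[n+1] (u n)).eval x := by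
  rw [P, derivative_C_mul, Function.iterate_succ_apply', eval_mul, eval_C]

lemma P_deriv2_eval (n : ℕ) (x : ℝ) :
    (derivative (derivative (P n))).eval x
      = (2 ^ n * n.factorial : ℝ)⁻¹ * (derivative^[n+2] (u n)).eval x := by
  rw [P, derivative_C_mul, derivative_C_mul, eval_mul, eval_C]
  congr 2
  rw [show n + 2 = (n+1)+1 by ring, Function.iterate_succ_apply', Function.iterate_succ_apply']

lemma P_ode (n : ℕ) (x : ℝ) :
    (x ^ 2 - 1) * (derivative (derivative (P n))).eval x
      = -2 * x * (derivative (P n)).eval x + (n:ℝ) * (n+1) * (P n).eval x := by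
  have e := E n (n+1) x
  have hidx : (n + 1 - 1 : ℕ) = n := by omega
  rw [hidx] at e
  rw [P_deriv_eval, P_deriv2_eval, P, eval_mul, eval_C]
  push_cast at e ⊢
  rw [show n + 1 + 1 = n + 2 by ring] at e
  linear_combination ((2:ℝ) ^ n * n.factorial)⁻¹ * e

lemma P_bound (n : ℕ) {x : ℝ} (hx : x ∈ Icc (-1:ℝ) 1) : |(P n).eval x| ≤ 1 := by
  rcases Nat.eq_zero_or_pos n with hn | hn
  · subst hn
    simp [P, u]
  have nn1 : (0:ℝ) < (n:ℝ) * (n+1) := by positivity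
  set Q : ℝ → ℝ := fun y => ((P n).eval y) ^ 2
      + (1 - y ^ 2) * ((derivative (P n)).eval y) ^ 2 / ((n:ℝ) * (n+1)) with hQ
  have hW : ∀ y : ℝ, HasDerivAt Q (2 * y * ((derivative (P n)).eval y) ^ 2 / ((n:ℝ) * (n+1))) y := by
    intro y
    have d1 : HasDerivAt (fun z => ((P n).eval z) ^ 2)
        (2 * (P n).eval y * (derivative (P n)).eval y) y := by
      have := ((P n).hasDerivAt y).fun_pow 2
      simpa using this
    have d2 : HasDerivAt (fun z : ℝ => 1 - z ^ 2) (-(2 * y)) y := by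
      simpa using ((hasDerivAt_pow 2 y).const_sub 1)
    have d3 : HasDerivAt (fun z => ((derivative (P n)).eval z) ^ 2)
        (2 * (derivative (P n)).eval y * (derivative (derivative (P n))).eval y) y := by
      have := ((derivative (P n)).hasDerivAt y).fun_pow 2
      simpa using this
    have d4 := ((d2.fun_mul d3).div_const ((n:ℝ) * (n+1)))
    have d5 := d1.fun_add d4
    refine d5.congr_deriv (Eq.symm ?_)
    have hsub : (1 - y ^ 2) * (derivative (derivative (P n))).eval y
        = 2 * y * (derivative (P n)).eval y - (n:ℝ) * (n+1) * (P n).eval y := by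
      linear_combination - (P_ode n y)
    field_simp
    linear_combination (-(P n).derivative.eval y) * hsub
  have hdiff : Differentiable ℝ Q := fun y => (hW y).differentiableAt
  have hderiv : ∀ y : ℝ, deriv Q y = 2 * y * ((derivative (P n)).eval y) ^ 2 / ((n:ℝ) * (n+1)) :=
    fun y => (hW y).deriv
  have hmono : MonotoneOn Q (Icc 0 1) := by
    apply monotoneOn_of_deriv_nonneg (convex_Icc 0 1) hdiff.continuous.continuousOn
      (hdiff.differentiableOn)
    intro y hy
    rw [interior_Icc] at hy
    rw [hderiv]
    have := hy.1
    positivity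
  have hanti : AntitoneOn Q (Icc (-1) 0) := by
    apply antitoneOn_of_deriv_nonpos (convex_Icc (-1) 0) hdiff.continuous.continuousOn
      (hdiff.differentiableOn)
    intro y hy
    rw [interior_Icc] at hy
    rw [hderiv]
    have h1 : y ≤ 0 := le_of_lt hy.2
    have h2 : (0:ℝ) ≤ ((derivative (P n)).eval y) ^ 2 := sq_nonneg _
    have h3 : 2 * y * ((derivative (P n)).eval y) ^ 2 ≤ 0 := by nlinarith
    exact div_nonpos_of_nonpos_of_nonneg h3 nn1.le
  have hQ1 : Q 1 = 1 := by
    rw [hQ]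
    simp [P_eval_one n]
  have hQm1 : Q (-1) = 1 := by
    rw [hQ]
    simp only [neg_one_sq, sub_self, zero_mul, zero_div, add_zero, one_pow]
    rw [P_eval_negone n, ← pow_mul, mul_comm n 2, pow_mul]
    norm_num
  have hle : Q x ≤ 1 := by
    rcases le_or_gt 0 x with h0 | h0
    · have := hmono (mem_Icc.mpr ⟨h0, hx.2⟩) (mem_Icc.mpr ⟨zero_le_one, le_refl 1⟩) hx.2
      rwa [hQ1] at this
    · have h := hanti (show (-1:ℝ) ∈ Icc (-1:ℝ) 0 by constructor <;> norm_num)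
        (mem_Icc.mpr ⟨hx.1, h0.le⟩) hx.1
      rwa [hQm1] at h
  have hsq : ((P n).eval x) ^ 2 ≤ 1 := by
    have h1 : 0 ≤ (1 - x ^ 2) * ((derivative (P n)).eval x) ^ 2 / ((n:ℝ) * (n+1)) := by
      have hx2 : x ^ 2 ≤ 1 := by
        rw [← one_pow 2]
        exact sq_le_sq' (by linarith [hx.1]) hx.2
      exact div_nonneg (mul_nonneg (by nlinarith : (0:ℝ) ≤ 1 - x ^ 2) (sq_nonneg _)) nn1.le
    rw [hQ] at hle
    simp only at hle
    linarith
  nlinarith [hsq, sq_abs ((P n).eval x), abs_nonneg ((P n).eval x)]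

lemma P_zero : P 0 = 1 := by
  simp [P, u]

lemma represent (q : ℕ) : ∀ z : ℝ[X], z.natDegree ≤ q →
    ∃ c : ℕ → ℝ, z = ∑ k ∈ Finset.range (q+1), Polynomial.C (c k) * P k := by
  induction q with
  | zero =>
    intro z hz
    refine ⟨fun _ => z.coeff 0, ?_⟩
    rw [Finset.sum_range_one, P_zero, mul_one]
    exact Polynomial.eq_C_of_natDegree_le_zero hz
  | succ q ih =>
    intro z hz
    set a := z.coeff (q+1) / (P (q+1)).coeff (q+1) with ha
    have hw : (z - Polynomial.C a * P (q+1)).natDegree ≤ q := by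
      rw [Polynomial.natDegree_le_iff_coeff_eq_zero]
      intro m hm
      rw [Polynomial.coeff_sub, Polynomial.coeff_C_mul]
      rcases eq_or_lt_of_le (Nat.succ_le_of_lt hm) with he | hlt
      · rw [← he, ha, div_mul_cancel₀ _ (P_coeff_ne (q+1)), sub_self]
      · rw [Polynomial.coeff_eq_zero_of_natDegree_lt (lt_of_le_of_lt hz hlt),
          Polynomial.coeff_eq_zero_of_natDegree_lt (lt_of_le_of_lt (P_natDegree_le (q+1)) hlt),
          mul_zero, sub_zero]
    obtain ⟨c, hc⟩ := ih _ hw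
    refine ⟨Function.update c (q+1) a, ?_⟩
    rw [Finset.sum_range_succ, Function.update_self]
    have hsum : ∑ k ∈ Finset.range (q+1), Polynomial.C (Function.update c (q+1) a k) * P k
        = ∑ k ∈ Finset.range (q+1), Polynomial.C (c k) * P k := by
      apply Finset.sum_congr rfl
      intro k hk
      rw [Function.update_of_ne (by simp at hk; omega)]
    rw [hsum, ← hc]
    ring

lemma sum_odd (q : ℕ) : ∑ k ∈ Finset.range (q+1), (2 * (k:ℝ) + 1) = ((q:ℝ) + 1) ^ 2 := by
  induction q with
  | zero => simp
  | succ q ih =>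
    rw [Finset.sum_range_succ, ih]
    push_cast
    ring

lemma P_orth' {j k : ℕ} (hjk : j ≠ k) :
    (∫ x in (-1:ℝ)..1, (P j).eval x * (P k).eval x) = 0 := by
  rcases lt_or_gt_of_ne hjk with h | h
  · exact P_orth h
  · have := P_orth h
    rw [← this]
    congr 1
    ext x
    ring

lemma inv1 (q : ℕ) (z : ℝ[X]) (hz : z.natDegree ≤ q) {x : ℝ} (hx : x ∈ Icc (-1:ℝ) 1) :
    |z.eval x| ≤ ((q:ℝ) + 1) ^ 2 / 2 * ∫ t in (-1:ℝ)..1, |z.eval t| := by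
  obtain ⟨c, hc⟩ := represent q z hz
  set I := ∫ t in (-1:ℝ)..1, |z.eval t| with hI
  have hI0 : 0 ≤ I := intervalIntegral.integral_nonneg (by norm_num) (fun t _ => abs_nonneg _)
  have key : ∀ k, k ∈ Finset.range (q+1) → |c k| ≤ (2 * (k:ℝ) + 1) / 2 * I := by
    intro k hk
    have horto : (∫ t in (-1:ℝ)..1, z.eval t * (P k).eval t) = c k * (2 / (2 * (k:ℝ) + 1)) := by
      have hev : ∀ t : ℝ, z.eval t * (P k).eval t
          = ∑ j ∈ Finset.range (q+1), c j * ((P j).eval t * (P k).eval t) := by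
        intro t
        rw [hc, Polynomial.eval_finset_sum, Finset.sum_mul]
        apply Finset.sum_congr rfl
        intro j _
        rw [eval_mul, eval_C]
        ring
      simp only [hev]
      rw [intervalIntegral.integral_finset_sum (fun j _ => by
        apply Continuous.intervalIntegrable
        exact continuous_const.mul ((contPoly (P j)).mul (contPoly (P k))))]
      have : ∀ j ∈ Finset.range (q+1),
          (∫ t in (-1:ℝ)..1, c j * ((P j).eval t * (P k).eval t))
            = if j = k then c k * (2 / (2 * (k:ℝ) + 1)) else 0 := by
        intro j _
        rw [intervalIntegral.integral_const_mul]
        by_cases hjk : j = k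
        · subst hjk
          rw [if_pos rfl, P_norm]
        · rw [if_neg hjk, P_orth' hjk, mul_zero]
      rw [Finset.sum_congr rfl this, Finset.sum_ite_eq' (Finset.range (q+1)) k
        (fun _ => c k * (2 / (2 * (k:ℝ) + 1))), if_pos hk]
    have habs : |∫ t in (-1:ℝ)..1, z.eval t * (P k).eval t| ≤ I := by
      refine (intervalIntegral.abs_integral_le_integral_abs (by norm_num)).trans ?_
      rw [hI]
      apply intervalIntegral.integral_mono_on (by norm_num)
      · exact ((contPoly z).mul (contPoly (P k))).abs.intervalIntegrable _ _
      · exact (contPoly z).abs.intervalIntegrable _ _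
      · intro t ht
        rw [abs_mul]
        have hb := P_bound k ht
        nlinarith [abs_nonneg (z.eval t), abs_nonneg ((P k).eval t)]
    have hck : c k = (2 * (k:ℝ) + 1) / 2 * ∫ t in (-1:ℝ)..1, z.eval t * (P k).eval t := by
      rw [horto]
      have : (2 * (k:ℝ) + 1) ≠ 0 := by positivity
      field_simp
    rw [hck, abs_mul, abs_of_nonneg (by positivity : (0:ℝ) ≤ (2 * (k:ℝ) + 1) / 2)]
    exact mul_le_mul_of_nonneg_left habs (by positivity)
  have hzx : z.eval x = ∑ k ∈ Finset.range (q+1), c k * (P k).eval x := by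
    rw [hc, Polynomial.eval_finset_sum]
    apply Finset.sum_congr rfl
    intro j _
    rw [eval_mul, eval_C]
  rw [hzx]
  calc |∑ k ∈ Finset.range (q+1), c k * (P k).eval x|
      ≤ ∑ k ∈ Finset.range (q+1), |c k * (P k).eval x| := Finset.abs_sum_le_sum_abs _ _
    _ ≤ ∑ k ∈ Finset.range (q+1), (2 * (k:ℝ) + 1) / 2 * I := by
        apply Finset.sum_le_sum
        intro k hk
        rw [abs_mul]
        have h1 := key k hk
        have h2 := P_bound k hx
        nlinarith [abs_nonneg (c k), abs_nonneg ((P k).eval x)]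
    _ = ((q:ℝ) + 1) ^ 2 / 2 * I := by
        rw [← sum_odd q, Finset.sum_div, Finset.sum_mul]

lemma inv2 (q : ℕ) (h : ℝ) (hh : 0 < h) (z : ℝ[X]) (hz : z.natDegree ≤ q) {x : ℝ}
    (hx : x ∈ Icc (0:ℝ) h) :
    |z.eval x| ≤ ((q:ℝ) + 1) ^ 2 / h * ∫ t in (0:ℝ)..h, |z.eval t| := by
  set w := z.comp (Polynomial.C (h/2) * (X + 1)) with hwdef
  have hwdeg : w.natDegree ≤ q := by
    refine (Polynomial.natDegree_comp_le).trans ?_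
    have h1 : (Polynomial.C (h/2) * (X + 1) : ℝ[X]).natDegree ≤ 1 := by
      refine (Polynomial.natDegree_C_mul_le _ _).trans ?_
      rw [show (X + 1 : ℝ[X]) = X + Polynomial.C 1 by rw [Polynomial.C_1]]
      rw [Polynomial.natDegree_X_add_C]
    calc z.natDegree * (Polynomial.C (h/2) * (X + 1) : ℝ[X]).natDegree
        ≤ q * 1 := Nat.mul_le_mul hz h1
      _ = q := by omega
  have hwev : ∀ t : ℝ, w.eval t = z.eval (h/2 * t + h/2) := by
    intro t
    rw [hwdef, Polynomial.eval_comp, eval_mul, eval_C, eval_add, eval_X, eval_one]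
    ring_nf
  have ht0 : (2 * x / h - 1) ∈ Icc (-1:ℝ) 1 := by
    constructor
    · have : (0:ℝ) ≤ 2 * x / h := div_nonneg (by linarith [hx.1]) hh.le
      linarith
    · have : 2 * x / h ≤ 2 := by
        rw [div_le_iff₀ hh]
        linarith [hx.2]
      linarith
  have hwx : w.eval (2 * x / h - 1) = z.eval x := by
    rw [hwev]
    congr 1
    field_simp
    try ring
  have h1 := inv1 q w hwdeg ht0
  rw [hwx] at h1
  have hcv : (∫ t in (-1:ℝ)..1, |w.eval t|) = (h/2)⁻¹ * ∫ s in (0:ℝ)..h, |z.eval s| := by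
    have heq : (∫ t in (-1:ℝ)..1, |w.eval t|)
        = ∫ t in (-1:ℝ)..1, (fun s => |z.eval s|) (h/2 * t + h/2) := by
      congr 1
      ext t
      rw [hwev]
    rw [heq, intervalIntegral.integral_comp_mul_add (fun s => |z.eval s|) (by positivity) (h/2)]
    rw [show h/2 * (-1) + h/2 = 0 by ring, show h/2 * 1 + h/2 = h by ring, smul_eq_mul]
  rw [hcv] at h1
  have heq : ((q:ℝ)+1)^2/2 * ((h/2)⁻¹ * ∫ s in (0:ℝ)..h, |z.eval s|)
      = ((q:ℝ)+1)^2/h * ∫ s in (0:ℝ)..h, |z.eval s| := by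
    field_simp
    try ring
  rw [heq] at h1
  exact h1

end Leg


namespace Aux

lemma hasDerivAt_ev (Q : MvPolynomial (Fin 2) ℝ) (x y : ℝ) :
    HasDerivAt (fun t => ev Q x t) (ev (MvPolynomial.pderiv (1 : Fin 2) Q) x y) y := by
  induction Q using MvPolynomial.induction_on with
  | C a =>
    simp only [ev, MvPolynomial.eval_C, MvPolynomial.pderiv_C, map_zero]
    exact hasDerivAt_const y a
  | add f g hf hg =>
    have h := hf.fun_add hg
    simpa [ev, map_add] using h
  | mul_X f i hf =>
    fin_cases i
    · show HasDerivAt (fun t => ev (f * MvPolynomial.X 0) x t)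
        (ev (MvPolynomial.pderiv (1 : Fin 2) (f * MvPolynomial.X 0)) x y) y
      have hxc : (fun t : ℝ => ev (f * MvPolynomial.X 0) x t) = fun t => ev f x t * x := by
        funext t
        simp [ev]
      have hval : ev (MvPolynomial.pderiv (1 : Fin 2) (f * MvPolynomial.X 0)) x y
          = ev (MvPolynomial.pderiv (1 : Fin 2) f) x y * x := by
        rw [MvPolynomial.pderiv_mul, MvPolynomial.pderiv_X_of_ne (by decide : (0 : Fin 2) ≠ 1)]
        simp [ev]
      rw [hxc, hval]
      exact hf.mul_const x
    · show HasDerivAt (fun t => ev (f * MvPolynomial.X 1) x t)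
        (ev (MvPolynomial.pderiv (1 : Fin 2) (f * MvPolynomial.X 1)) x y) y
      have hxc : (fun t : ℝ => ev (f * MvPolynomial.X 1) x t) = fun t => ev f x t * t := by
        funext t
        simp [ev]
      have hval : ev (MvPolynomial.pderiv (1 : Fin 2) (f * MvPolynomial.X 1)) x y
          = ev (MvPolynomial.pderiv (1 : Fin 2) f) x y * y + ev f x y := by
        rw [MvPolynomial.pderiv_mul, MvPolynomial.pderiv_X_self]
        simp [ev]
      rw [hxc, hval]
      simpa using hf.fun_mul (hasDerivAt_id y)

lemma cont_ev (Q : MvPolynomial (Fin 2) ℝ) (x : ℝ) : Continuous (fun t => ev Q x t) := by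
  have : Differentiable ℝ (fun t => ev Q x t) :=
    fun y => (hasDerivAt_ev Q x y).differentiableAt
  exact this.continuous

lemma ftc_ev (Q : MvPolynomial (Fin 2) ℝ) (x y : ℝ) :
    (∫ t in (0:ℝ)..y, ev (MvPolynomial.pderiv (1 : Fin 2) Q) x t) = ev Q x y - ev Q x 0 :=
  integral_eq_sub_of_hasDerivAt
    (fun t _ => hasDerivAt_ev Q x t)
    ((cont_ev _ x).intervalIntegrable _ _)

lemma finsupp_sum_eq (m : Fin 2 →₀ ℕ) : (m.sum fun _ e => e) = m 0 + m 1 := by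
  rw [Finsupp.sum_fintype _ _ (fun _ => rfl), Fin.sum_univ_two]

lemma td_pderiv (f : MvPolynomial (Fin 2) ℝ) :
    (MvPolynomial.pderiv (1 : Fin 2) f).totalDegree ≤ f.totalDegree := by
  have hrep : MvPolynomial.pderiv (1 : Fin 2) f
      = ∑ m ∈ f.support,
          MvPolynomial.pderiv (1 : Fin 2) (MvPolynomial.monomial m (MvPolynomial.coeff m f)) := by
    rw [← map_sum, ← f.as_sum]
  rw [hrep]
  apply MvPolynomial.totalDegree_finsetSum_le
  intro m hm
  rw [MvPolynomial.pderiv_monomial]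
  refine (MvPolynomial.totalDegree_monomial_le _ _).trans ?_
  refine le_trans ?_ (MvPolynomial.le_totalDegree hm)
  rw [finsupp_sum_eq]
  show ((m - Finsupp.single 1 1).sum fun _ e => e) ≤ m 0 + m 1
  rw [finsupp_sum_eq]
  have h0 : ((m - Finsupp.single 1 1 : Fin 2 →₀ ℕ)) 0 ≤ m 0 := by
    rw [Finsupp.tsub_apply]
    omega
  have h1 : ((m - Finsupp.single 1 1 : Fin 2 →₀ ℕ)) 1 ≤ m 1 := by
    rw [Finsupp.tsub_apply]
    omega
  omega

lemma ev_eq_sum (Q : MvPolynomial (Fin 2) ℝ) (s t : ℝ) :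
    ev Q s t = ∑ m ∈ Q.support, MvPolynomial.coeff m Q * (s ^ (m 0) * t ^ (m 1)) := by
  rw [ev, MvPolynomial.eval_eq']
  apply Finset.sum_congr rfl
  intro m _
  congr 1
  rw [Fin.prod_univ_two]
  simp

lemma exists_Z (Q : MvPolynomial (Fin 2) ℝ) (d : ℕ) (hQ : Q.totalDegree ≤ d) (hx hy : ℝ)
    (hx0 : hx ≠ 0) :
    ∃ Z : ℝ[X], Z.natDegree ≤ d + 1 ∧
      ∀ s : ℝ, Z.eval s = ∫ t in (0:ℝ)..(hy * (1 - s / hx)), ev Q s t := by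
  set A : ℝ[X] := Polynomial.C hy * (1 - Polynomial.C hx⁻¹ * X) with hA
  have hAdeg : A.natDegree ≤ 1 := by
    refine (Polynomial.natDegree_C_mul_le _ _).trans ?_
    refine (Polynomial.natDegree_sub_le _ _).trans ?_
    simp only [Polynomial.natDegree_one]
    refine max_le (by omega) ?_
    refine (Polynomial.natDegree_C_mul_le _ _).trans ?_
    simp [Polynomial.natDegree_X]
  have hAev : ∀ s : ℝ, A.eval s = hy * (1 - s / hx) := by
    intro s
    rw [hA]
    simp only [eval_mul, eval_C, eval_sub, eval_one, eval_X]
    rw [div_eq_mul_inv]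
    ring
  refine ⟨∑ m ∈ Q.support,
    Polynomial.C (MvPolynomial.coeff m Q / ((m 1 : ℝ) + 1)) * (X ^ (m 0) * A ^ (m 1 + 1)), ?_, ?_⟩
  · apply Polynomial.natDegree_sum_le_of_forall_le
    intro m hm
    refine (Polynomial.natDegree_C_mul_le _ _).trans ?_
    refine (Polynomial.natDegree_mul_le).trans ?_
    have h1 : (X ^ (m 0) : ℝ[X]).natDegree ≤ m 0 := Polynomial.natDegree_X_pow_le _
    have h2 : (A ^ (m 1 + 1)).natDegree ≤ (m 1 + 1) * 1 := by
      refine (Polynomial.natDegree_pow_le).trans ?_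
      exact Nat.mul_le_mul_left _ hAdeg
    have h3 := MvPolynomial.le_totalDegree hm
    rw [finsupp_sum_eq] at h3
    omega
  · intro s
    have hint : (∫ t in (0:ℝ)..(hy * (1 - s / hx)), ev Q s t)
        = ∑ m ∈ Q.support, MvPolynomial.coeff m Q
            * (s ^ (m 0) * ((hy * (1 - s / hx)) ^ (m 1 + 1) / ((m 1 : ℝ) + 1))) := by
      have hi : ∀ m ∈ Q.support, IntervalIntegrable
          (fun t => MvPolynomial.coeff m Q * (s ^ (m 0) * t ^ (m 1)))
          MeasureTheory.volume 0 (hy * (1 - s / hx)) := by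
        intro m _
        apply Continuous.intervalIntegrable
        continuity
      have h1 : (∫ t in (0:ℝ)..(hy * (1 - s / hx)), ev Q s t)
          = ∑ m ∈ Q.support, ∫ t in (0:ℝ)..(hy * (1 - s / hx)),
              MvPolynomial.coeff m Q * (s ^ (m 0) * t ^ (m 1)) := by
        rw [← integral_finset_sum hi]
        congr 1
        ext t
        exact ev_eq_sum Q s t
      rw [h1]
      apply Finset.sum_congr rfl
      intro m _
      rw [integral_const_mul]
      congr 1
      rw [integral_const_mul, integral_pow]
      rw [zero_pow (by omega : m 1 + 1 ≠ 0)]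
      push_cast
      ring
    rw [hint, Polynomial.eval_finset_sum]
    apply Finset.sum_congr rfl
    intro m _
    rw [eval_mul, eval_C, eval_mul, eval_pow, eval_pow, eval_X, hAev]
    ring

lemma cauchy_schwarz (G : ℝ → ℝ) (hG : Continuous G) (Y : ℝ) (hY : 0 ≤ Y) :
    (∫ t in (0:ℝ)..Y, |G t|) ^ 2 ≤ Y * ∫ t in (0:ℝ)..Y, (G t) ^ 2 := by
  rcases eq_or_lt_of_le hY with h0 | h0
  · rw [← h0]
    simp
  set A := ∫ t in (0:ℝ)..Y, |G t| with hAdef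
  set B := ∫ t in (0:ℝ)..Y, (G t) ^ 2 with hBdef
  set c := A / Y with hc
  have hexp : ∀ t : ℝ, ((G t) ^ 2 - 2 * c * |G t| + c ^ 2) = (|G t| - c) ^ 2 := by
    intro t
    have h := sq_abs (G t)
    nlinarith [h]
  have hnn : (0:ℝ) ≤ ∫ t in (0:ℝ)..Y, ((G t) ^ 2 - 2 * c * |G t| + c ^ 2) := by
    apply integral_nonneg hY
    intro t _
    rw [hexp t]
    exact sq_nonneg _
  have hsplit : (∫ t in (0:ℝ)..Y, ((G t) ^ 2 - 2 * c * |G t| + c ^ 2))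
      = B - 2 * c * A + Y * c ^ 2 := by
    rw [integral_add, integral_sub,
      integral_const_mul, integral_const]
    · rw [sub_zero, smul_eq_mul]
    · exact (hG.pow 2).intervalIntegrable _ _
    · exact (continuous_const.mul hG.abs).intervalIntegrable _ _
    · exact ((hG.pow 2).sub (continuous_const.mul hG.abs)).intervalIntegrable _ _
    · exact intervalIntegrable_const
  rw [hsplit, hc] at hnn
  have hY' : Y ≠ 0 := ne_of_gt h0
  have hkey : 0 ≤ B - A ^ 2 / Y := by
    have : B - 2 * (A / Y) * A + Y * (A / Y) ^ 2 = B - A ^ 2 / Y := by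
      field_simp
      ring
    linarith [this ▸ hnn]
  have h2 : Y * (B - A ^ 2 / Y) = Y * B - A ^ 2 := by
    rw [mul_sub, mul_div_cancel₀ _ hY']
  have h3 := mul_nonneg h0.le hkey
  rw [h2] at h3
  linarith

end Aux

/-- Anisotropic polynomial inverse estimate on the triangle
`T_h = {(x,y) : 0 < x < h_x, 0 < y < h_y (1 - x/h_x)}`:
there is `C > 0` independent of `p, h_x, h_y` such that for every bivariate polynomial
`π` of total degree at most `p`,
`‖π‖_{L∞(T_h)} ≤ C p (h_y/h_x)^{1/2} ‖∂_y π‖_{L²(T_h)} + ‖π(·,0)‖_{L∞(0,h_x)}`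
(sup norms expressed pointwise resp. via a bound `M`). -/
theorem stmt7 :
    ∃ C : ℝ, 0 < C ∧
      ∀ (p : ℕ) (hx hy : ℝ), hx ∈ Set.Ioc (0 : ℝ) 1 → hy ∈ Set.Ioc (0 : ℝ) 1 →
      ∀ π : MvPolynomial (Fin 2) ℝ, MvPolynomial.totalDegree π ≤ p →
      ∀ M : ℝ, (∀ x ∈ Set.Ioo (0 : ℝ) hx, |ev π x 0| ≤ M) →
      ∀ x y : ℝ, 0 < x → x < hx → 0 < y → y < hy * (1 - x / hx) →
        |ev π x y| ≤
          C * (p : ℝ) * Real.sqrt (hy / hx) *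
              Real.sqrt (∫ s in (0 : ℝ)..hx, ∫ t in (0 : ℝ)..(hy * (1 - s / hx)),
                (ev (MvPolynomial.pderiv (1 : Fin 2) π) s t) ^ 2) + M := by
  refine ⟨4, by norm_num, ?_⟩
  intro p hx hy hhx hhy π hπ M hM x y hx0 hxlt hy0 hylt
  obtain ⟨hxpos, hxle⟩ := hhx
  obtain ⟨hypos, hyle⟩ := hhy
  set g := MvPolynomial.pderiv (1 : Fin 2) π with hg
  have hMx : |ev π x 0| ≤ M := hM x ⟨hx0, hxlt⟩
  by_cases hp : p = 0
  · subst hp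
    have h0 : π.totalDegree = 0 := Nat.le_zero.mp hπ
    rw [MvPolynomial.totalDegree_eq_zero_iff] at h0
    have hconst : ev π x y = ev π x 0 := by
      rw [Aux.ev_eq_sum, Aux.ev_eq_sum]
      apply Finset.sum_congr rfl
      intro m hm
      rw [h0 m hm 0, h0 m hm 1]
      norm_num
    rw [hconst]
    simp only [Nat.cast_zero, mul_zero, zero_mul, zero_add]
    exact hMx
  have hp1 : 1 ≤ p := Nat.one_le_iff_ne_zero.mpr hp
  have hYxpos : 0 < hy * (1 - x / hx) := lt_trans hy0 hylt
  have hYx : hy * (1 - x / hx) ≤ hy := by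
    have hd : 0 < x / hx := div_pos hx0 hxpos
    nlinarith
  have hgg : (g * g).totalDegree ≤ 2 * p := by
    refine (MvPolynomial.totalDegree_mul _ _).trans ?_
    have hgd := (Aux.td_pderiv π).trans hπ
    rw [hg]
    omega
  obtain ⟨Z, hZdeg, hZev⟩ := Aux.exists_Z (g * g) (2 * p) hgg hx hy (ne_of_gt hxpos)
  have hZdeg' : Z.natDegree ≤ 2 * p + 1 := hZdeg
  have hZev' : ∀ s : ℝ, Polynomial.eval s Z = ∫ t in (0:ℝ)..(hy * (1 - s / hx)), (ev g s t) ^ 2 := by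
    intro s
    rw [hZev s]
    congr 1
    ext t
    rw [sq]
    exact map_mul _ _ _
  have hZnn : ∀ s ∈ Icc (0:ℝ) hx, 0 ≤ Polynomial.eval s Z := by
    intro s hs
    rw [hZev' s]
    apply intervalIntegral.integral_nonneg
    · have h5 : s / hx ≤ 1 := (div_le_one hxpos).mpr hs.2
      nlinarith
    · intro t _
      positivity
  set I := ∫ s in (0 : ℝ)..hx, ∫ t in (0 : ℝ)..(hy * (1 - s / hx)), (ev g s t) ^ 2 with hI
  have hIZ : I = ∫ s in (0:ℝ)..hx, Polynomial.eval s Z := by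
    rw [hI]
    congr 1
    ext s
    rw [hZev' s]
  have hI0 : 0 ≤ I := by
    rw [hIZ]
    exact intervalIntegral.integral_nonneg hxpos.le hZnn
  have habs : (∫ s in (0:ℝ)..hx, |Polynomial.eval s Z|) = I := by
    rw [hIZ]
    apply intervalIntegral.integral_congr
    intro s hs
    rw [uIcc_of_le hxpos.le] at hs
    exact abs_of_nonneg (hZnn s hs)
  have hinv := Leg.inv2 (2*p+1) hx hxpos Z hZdeg' (⟨hx0.le, hxlt.le⟩ : x ∈ Icc (0:ℝ) hx)
  rw [habs] at hinv
  have hZx : Polynomial.eval x Z ≤ (((2*p+1 : ℕ):ℝ) + 1) ^ 2 / hx * I :=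
    le_trans (le_abs_self _) hinv
  have hftc := Aux.ftc_ev π x y
  have heq : ev π x y = ev π x 0 + ∫ t in (0:ℝ)..y, ev g x t := by
    rw [hg]
    linarith [hftc]
  have h1 : |ev π x y| ≤ M + ∫ t in (0:ℝ)..y, |ev g x t| := by
    rw [heq]
    refine (abs_add_le _ _).trans ?_
    exact add_le_add hMx (intervalIntegral.abs_integral_le_integral_abs hy0.le)
  have h2 : (∫ t in (0:ℝ)..y, |ev g x t|) ≤ ∫ t in (0:ℝ)..(hy * (1 - x / hx)), |ev g x t| := by
    apply intervalIntegral.integral_mono_interval le_rfl hy0.le hylt.le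
    · exact MeasureTheory.ae_of_all _ (fun t => abs_nonneg _)
    · exact ((Aux.cont_ev g x).abs).intervalIntegrable _ _
  have hcs := Aux.cauchy_schwarz (fun t => ev g x t) (Aux.cont_ev g x)
    (hy * (1 - x / hx)) hYxpos.le
  have hB : (∫ t in (0:ℝ)..(hy * (1 - x / hx)), (ev g x t) ^ 2) = Polynomial.eval x Z :=
    (hZev' x).symm
  rw [hB] at hcs
  have hAnn : 0 ≤ ∫ t in (0:ℝ)..(hy * (1 - x / hx)), |ev g x t| :=
    intervalIntegral.integral_nonneg hYxpos.le (fun _ _ => abs_nonneg _)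
  have hsqrt : (∫ t in (0:ℝ)..(hy * (1 - x / hx)), |ev g x t|)
      ≤ Real.sqrt ((hy * (1 - x / hx)) * Polynomial.eval x Z) := by
    have h6 := Real.sqrt_le_sqrt hcs
    rwa [Real.sqrt_sq hAnn] at h6
  have hZx0 : 0 ≤ Polynomial.eval x Z := hZnn x ⟨hx0.le, hxlt.le⟩
  have hmono : (hy * (1 - x / hx)) * Polynomial.eval x Z
      ≤ hy * ((((2*p+1 : ℕ):ℝ) + 1) ^ 2 / hx * I) := by
    have h4 : 0 ≤ (((2*p+1 : ℕ):ℝ) + 1) ^ 2 / hx * I :=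
      mul_nonneg (div_nonneg (sq_nonneg _) hxpos.le) hI0
    exact mul_le_mul hYx hZx hZx0 hypos.le
  have hfinal : (∫ t in (0:ℝ)..(hy * (1 - x / hx)), |ev g x t|)
      ≤ (2*(p:ℝ)+2) * (Real.sqrt (hy / hx) * Real.sqrt I) := by
    refine hsqrt.trans ?_
    refine (Real.sqrt_le_sqrt hmono).trans ?_
    rw [show hy * ((((2*p+1 : ℕ):ℝ) + 1) ^ 2 / hx * I)
        = (2*(p:ℝ)+2) ^ 2 * ((hy / hx) * I) from by push_cast; ring]
    rw [Real.sqrt_mul (by positivity : (0:ℝ) ≤ (2*(p:ℝ)+2) ^ 2),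
      Real.sqrt_sq (by positivity : (0:ℝ) ≤ 2*(p:ℝ)+2),
      Real.sqrt_mul (by positivity : (0:ℝ) ≤ hy / hx)]
  have hs0 : 0 ≤ Real.sqrt (hy / hx) * Real.sqrt I := by positivity
  have hplarge : (2*(p:ℝ)+2) ≤ 4*(p:ℝ) := by
    have : (1:ℝ) ≤ (p:ℝ) := by exact_mod_cast hp1
    linarith
  calc |ev π x y| ≤ M + ∫ t in (0:ℝ)..y, |ev g x t| := h1
    _ ≤ M + ∫ t in (0:ℝ)..(hy * (1 - x / hx)), |ev g x t| := by linarith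
    _ ≤ M + (2*(p:ℝ)+2) * (Real.sqrt (hy / hx) * Real.sqrt I) := by linarith
    _ ≤ 4 * (p:ℝ) * Real.sqrt (hy / hx) * Real.sqrt I + M := by nlinarith [hs0, hplarge]
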